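/- A finite simple graph G has a {1,2}-factor if and only if for every subset S of V(G), the number of isolated vertices of G − S is at most |S|. -/

import Mathlib

/-- A `{1,2}`-factor of `G` : a spanning subgraph `H ≤ G` all of whose connected components
are regular of degree one or two, i.e. every vertex has degree 1 or 2 in `H` and any two
vertices in the same component of `H` have equal degree. -/
def SimpleGraph.Has12Factor {V : Type*} [Fintype V] (G : SimpleGraph V) : Prop :=
  ∃ H : SimpleGraph V, H ≤ G ∧
    (∀ v : V, (H.neighborSet v).ncard = 1 ∨ (H.neighborSet v).ncard = 2) ∧
    (∀ u v : V, H.Reachable u v → (H.neighborSet u).ncard = (H.neighborSet v).ncard)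

/-- A graph has a `{1,2}`-factor iff `i(G - S) ≤ |S|` for all `S ⊆ V(G)`. -/
theorem stmt_0 {V : Type*} [Fintype V] (G : SimpleGraph V) :
    G.Has12Factor ↔
      ∀ S : Finset V,
        {v : V | v ∉ S ∧ ∀ u : V, u ∉ S → ¬ G.Adj v u}.ncard ≤ S.card := by
  classical
  constructor
  · -- Forward direction: a {1,2}-factor implies the isolated-vertex condition.
    rintro ⟨H, hHG, hdeg, hreach⟩ S
    set d : V → ℕ := fun v => (H.neighborSet v).ncard with hd
    set Iset : Set V := {v : V | v ∉ S ∧ ∀ u : V, u ∉ S → ¬ G.Adj v u} with hIset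
    set I : Finset V := Iset.toFinset with hIdef
    have hIcard : Iset.ncard = I.card := Set.ncard_eq_toFinset_card' _
    rw [hIcard]
    have hkey : ∀ v ∈ I, ∀ w, H.Adj v w → w ∈ S := by
      intro v hv w hw
      rw [hIdef, Set.mem_toFinset] at hv
      by_contra hwS
      exact hv.2 w hwS (hHG hw)
    have hadj_d : ∀ v w, H.Adj v w → d v = d w := fun v w h =>
      hreach v w h.reachable
    -- neighbor finsets
    set nb : V → Finset V := fun v => (H.neighborSet v).toFinset with hnbdef
    have hnb : ∀ v, (nb v).card = d v := fun v =>
      (Set.ncard_eq_toFinset_card' _).symm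
    have hnbmem : ∀ v w, w ∈ nb v ↔ H.Adj v w := by
      intro v w
      rw [hnbdef]
      simp [SimpleGraph.mem_neighborSet]
    set I₁ : Finset V := I.filter (fun v => d v = 1) with hI₁
    set I₂ : Finset V := I.filter (fun v => d v = 2) with hI₂
    have hsplit : I.card = I₁.card + I₂.card := by
      have h2 : I₂ = I.filter (fun v => ¬ d v = 1) := by
        ext v
        simp only [hI₂, Finset.mem_filter]
        constructor
        · rintro ⟨hv, h2⟩; exact ⟨hv, by omega⟩
        · rintro ⟨hv, h1⟩
          rcases hdeg v with h | h
          · exact absurd h h1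
          · exact ⟨hv, h⟩
      rw [h2]
      exact (Finset.card_filter_add_card_filter_not _).symm
    -- pick the unique neighbor of a degree-1 vertex
    set f : V → V := fun v =>
      if h : ∃ a, H.neighborSet v = {a} then h.choose else v with hfdef
    have hf1 : ∀ v, d v = 1 → H.neighborSet v = {f v} := by
      intro v hv
      have h : ∃ a, H.neighborSet v = {a} := Set.ncard_eq_one.mp hv
      rw [hfdef]
      simp only [dif_pos h]
      exact h.choose_spec
    have hfadj : ∀ v, d v = 1 → H.Adj v (f v) := by
      intro v hv
      have : f v ∈ H.neighborSet v := by rw [hf1 v hv]; exact rfl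
      exact this
    have hinj : Set.InjOn f ↑I₁ := by
      intro v hv w hw hvw
      rw [Finset.mem_coe, hI₁, Finset.mem_filter] at hv hw
      have hadjv := hfadj v hv.2
      have hadjw := hfadj w hw.2
      have hdv : d (f v) = 1 := (hadj_d v (f v) hadjv) ▸ hv.2
      have hset := hf1 (f v) hdv
      have h1 : v ∈ H.neighborSet (f v) := hadjv.symm
      have h2 : w ∈ H.neighborSet (f v) := by rw [hvw]; exact hadjw.symm
      rw [hset] at h1 h2
      rw [Set.mem_singleton_iff] at h1 h2
      rw [h1, h2]
    set T₁ : Finset V := I₁.image f with hT₁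
    set T₂ : Finset V := S.filter (fun s => ∃ v ∈ I₂, H.Adj s v) with hT₂def
    have hT₁card : T₁.card = I₁.card := Finset.card_image_of_injOn hinj
    have hT₁S : T₁ ⊆ S := by
      intro s hs
      rw [hT₁, Finset.mem_image] at hs
      obtain ⟨v, hv, rfl⟩ := hs
      rw [hI₁, Finset.mem_filter] at hv
      exact hkey v hv.1 (f v) (hfadj v hv.2)
    have hT₁d : ∀ s ∈ T₁, d s = 1 := by
      intro s hs
      rw [hT₁, Finset.mem_image] at hs
      obtain ⟨v, hv, rfl⟩ := hs
      rw [hI₁, Finset.mem_filter] at hv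
      exact (hadj_d v (f v) (hfadj v hv.2)) ▸ hv.2
    have hT₂d : ∀ s ∈ T₂, d s = 2 := by
      intro s hs
      rw [hT₂def, Finset.mem_filter] at hs
      obtain ⟨v, hv, hadj⟩ := hs.2
      rw [hI₂, Finset.mem_filter] at hv
      exact (hadj_d s v hadj).trans hv.2
    have hdisj : Disjoint T₁ T₂ := by
      rw [Finset.disjoint_left]
      intro s hs1 hs2
      have := hT₁d s hs1
      have := hT₂d s hs2
      omega
    -- double counting for I₂
    have hfull : ∀ v ∈ I₂, T₂.filter (fun s => H.Adj v s) = nb v := by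
      intro v hv
      ext s
      rw [Finset.mem_filter, hnbmem]
      constructor
      · rintro ⟨_, h⟩; exact h
      · intro h
        refine ⟨?_, h⟩
        rw [hT₂def, Finset.mem_filter]
        exact ⟨hkey v (Finset.mem_of_mem_filter v hv) s h, ⟨v, hv, h.symm⟩⟩
    have hsum : ∑ v ∈ I₂, (T₂.filter (fun s => H.Adj v s)).card
        = ∑ s ∈ T₂, (I₂.filter (fun v => H.Adj v s)).card := by
      simp only [Finset.card_filter]
      exact Finset.sum_comm
    have hlhs : ∑ v ∈ I₂, (T₂.filter (fun s => H.Adj v s)).card = 2 * I₂.card := by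
      have hterm : ∀ v ∈ I₂, (T₂.filter (fun s => H.Adj v s)).card = 2 := by
        intro v hv
        rw [hfull v hv, hnb]
        exact (Finset.mem_filter.mp hv).2
      rw [Finset.sum_congr rfl hterm]
      simp [Finset.sum_const, mul_comm]
    have hrhs : ∑ s ∈ T₂, (I₂.filter (fun v => H.Adj v s)).card ≤ 2 * T₂.card := by
      calc ∑ s ∈ T₂, (I₂.filter (fun v => H.Adj v s)).card
          ≤ ∑ s ∈ T₂, 2 := by
            refine Finset.sum_le_sum ?_
            intro s hs
            have hsub : I₂.filter (fun v => H.Adj v s) ⊆ nb s := by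
              intro v hv
              rw [hnbmem]
              exact (Finset.mem_filter.mp hv).2.symm
            calc (I₂.filter (fun v => H.Adj v s)).card ≤ (nb s).card :=
                  Finset.card_le_card hsub
              _ = 2 := by rw [hnb]; exact hT₂d s hs
        _ = 2 * T₂.card := by simp [Finset.sum_const, mul_comm]
    have hI₂le : I₂.card ≤ T₂.card := by omega
    calc I.card = I₁.card + I₂.card := hsplit
      _ ≤ T₁.card + T₂.card := by omega
      _ = (T₁ ∪ T₂).card := (Finset.card_union_of_disjoint hdisj).symm
      _ ≤ S.card := Finset.card_le_card (by
          intro s hs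
          rcases Finset.mem_union.mp hs with h | h
          · exact hT₁S h
          · exact Finset.mem_of_mem_filter s h)
  · -- Backward direction: condition implies a {1,2}-factor via Hall's theorem.
    intro hcond
    set nbG : V → Finset V := fun v => (G.neighborSet v).toFinset with hnbGdef
    have hnbGmem : ∀ v w, w ∈ nbG v ↔ G.Adj v w := by
      intro v w
      rw [hnbGdef]
      simp [SimpleGraph.mem_neighborSet]
    have hall : ∀ T : Finset V, T.card ≤ (T.biUnion nbG).card := by
      intro T
      by_contra hc
      push_neg at hc
      set N : Finset V := T.biUnion nbG with hN
      set S : Finset V := N \ T with hS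
      have hmemN : ∀ v u, v ∈ T → G.Adj v u → u ∈ N := by
        intro v u hv hadj
        rw [hN]
        exact Finset.mem_biUnion.mpr ⟨v, hv, (hnbGmem v u).mpr hadj⟩
      have hsub : ↑(T \ N) ⊆ {v : V | v ∉ S ∧ ∀ u : V, u ∉ S → ¬ G.Adj v u} := by
        intro v hv
        rw [Finset.mem_coe, Finset.mem_sdiff] at hv
        obtain ⟨hvT, hvN⟩ := hv
        constructor
        · intro hvS
          exact (Finset.mem_sdiff.mp hvS).2 hvT
        · intro u huS hadj
          have huN : u ∈ N := hmemN v u hvT hadj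
          have huT : u ∈ T := by
            by_contra huT
            exact huS (Finset.mem_sdiff.mpr ⟨huN, huT⟩)
          exact hvN (hmemN u v huT hadj.symm)
      have h1 : (T \ N).card ≤ S.card := by
        calc (T \ N).card = (↑(T \ N) : Set V).ncard := (Set.ncard_coe_finset _).symm
          _ ≤ {v : V | v ∉ S ∧ ∀ u : V, u ∉ S → ¬ G.Adj v u}.ncard :=
              Set.ncard_le_ncard hsub (Set.toFinite _)
          _ ≤ S.card := hcond S
      have e1 : (T \ N).card + (T ∩ N).card = T.card := Finset.card_sdiff_add_card_inter T N
      have e2 : (N \ T).card + (N ∩ T).card = N.card := Finset.card_sdiff_add_card_inter N T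
      have e3 : (T ∩ N).card = (N ∩ T).card := by rw [Finset.inter_comm]
      have hScard : S.card = (N \ T).card := rfl
      omega
    obtain ⟨f, hfinj, hfmem⟩ := (Finset.all_card_le_biUnion_card_iff_exists_injective nbG).mp hall
    have hfadj : ∀ v, G.Adj v (f v) := fun v => (hnbGmem v (f v)).mp (hfmem v)
    have hfne : ∀ v, f v ≠ v := fun v => (hfadj v).ne'
    have hfsurj : Function.Surjective f := (Finite.injective_iff_surjective.mp hfinj)
    set g : V → V := fun v => (hfsurj v).choose with hgdef
    have hg : ∀ v, f (g v) = v := fun v => (hfsurj v).choose_spec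
    set H : SimpleGraph V :=
      { Adj := fun a b => f a = b ∨ f b = a
        symm := by
          refine ⟨fun a b h => ?_⟩
          tauto
        loopless := by
          refine ⟨fun a h => ?_⟩
          rcases h with h | h <;> exact hfne a h } with hHdef
    have hHadj : ∀ a b, H.Adj a b ↔ (f a = b ∨ f b = a) := fun a b => Iff.rfl
    have hle : H ≤ G := by
      intro a b hab
      rcases (hHadj a b).mp hab with h | h
      · exact h ▸ hfadj a
      · exact h ▸ (hfadj b).symm
    have hNS : ∀ v, H.neighborSet v = {f v, g v} := by
      intro v
      ext x
      rw [SimpleGraph.mem_neighborSet, hHadj]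
      constructor
      · rintro (h | h)
        · exact Or.inl h.symm
        · refine Or.inr (hfinj ?_)
          rw [h, hg]
      · rintro (h | h)
        · exact Or.inl h.symm
        · refine Or.inr ?_
          rw [h, hg]
    have hd1 : ∀ v, f (f v) = v → (H.neighborSet v).ncard = 1 := by
      intro v hv
      have hgv : g v = f v := by
        refine hfinj ?_
        rw [hg, hv]
      rw [hNS, hgv, Set.pair_eq_singleton, Set.ncard_singleton]
    have hd2 : ∀ v, f (f v) ≠ v → (H.neighborSet v).ncard = 2 := by
      intro v hv
      have hgv : f v ≠ g v := by
        intro h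
        exact hv (by rw [h, hg])
      rw [hNS]
      exact Set.ncard_pair hgv
    have hP : ∀ a b, H.Adj a b → (f (f a) = a ↔ f (f b) = b) := by
      intro a b hab
      rcases (hHadj a b).mp hab with h | h
      · subst h
        constructor
        · intro h1
          rw [h1]
        · intro h1
          exact hfinj h1
      · subst h
        constructor
        · intro h1
          exact hfinj h1
        · intro h1
          rw [h1]
    have hstep : ∀ a b, H.Adj a b →
        (H.neighborSet a).ncard = (H.neighborSet b).ncard := by
      intro a b hab
      by_cases ha : f (f a) = a
      · rw [hd1 a ha, hd1 b ((hP a b hab).mp ha)]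
      · rw [hd2 a ha, hd2 b (fun hb => ha ((hP a b hab).mpr hb))]
    have hwalk : ∀ {u v : V}, H.Walk u v →
        (H.neighborSet u).ncard = (H.neighborSet v).ncard := by
      intro u v w
      induction w with
      | nil => rfl
      | cons h p ih => exact (hstep _ _ h).trans ih
    refine ⟨H, hle, ?_, ?_⟩
    · intro v
      by_cases hv : f (f v) = v
      · exact Or.inl (hd1 v hv)
      · exact Or.inr (hd2 v hv)
    · intro u v h
      exact h.elim fun w => hwalk w
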